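/- Let (X, ℤ) be a nontrivial minimal dynamical system on a compact metric space X, let U ⊆ X be a nonempty open set, and let φ : X → [0,1] be a continuous map with φ(X \ U) = {1} and such that φ⁻¹(0) has nonempty interior. Then for every x ∈ X there exists a number N (depending only on the set φ⁻¹(0)) such that the product φ(x)·φ(x−1)·⋯·φ(x−N) = 0; consequently the series ξ(x) = Σ_{j≥1} j·φ(x)φ(x−1)⋯φ(x−j+1)(1−φ(x−j)) is a finite sum and defines a continuous function ξ : X → ℝ. -/

import Mathlib

/-- The action of `z ∈ ℤ` on `X` generated by the homeomorphism `T`:  `x + z = T^z x`. -/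
def actZ {X : Type*} [TopologicalSpace X] (T : X ≃ₜ X) (z : ℤ) (x : X) : X :=
  (T.toEquiv ^ z) x

/-- The `j`-th term of the series defining Lindenstrauss' level function:
`j · φ(x)·φ(x−1)⋯φ(x−j+1)·(1−φ(x−j))`. -/
noncomputable def levelTerm {X : Type*} [TopologicalSpace X] (T : X ≃ₜ X)
    (φ : X → ℝ) (j : ℕ) (x : X) : ℝ :=
  (j : ℝ) * (∏ i ∈ Finset.range j, φ (actZ T (-(i : ℤ)) x)) * (1 - φ (actZ T (-(j : ℤ)) x))

lemma actZ_add {X : Type*} [TopologicalSpace X] (T : X ≃ₜ X) (a b : ℤ) (x : X) :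
    actZ T a (actZ T b x) = actZ T (a + b) x := by
  simp [actZ, zpow_add, Equiv.Perm.mul_apply]

lemma actZ_cont {X : Type*} [TopologicalSpace X] (T : X ≃ₜ X) (z : ℤ) :
    Continuous (actZ T z) := by
  induction z using Int.induction_on with
  | zero => convert continuous_id using 1; funext x; simp [actZ]
  | succ n ih =>
      have h : actZ T (n + 1) = fun x => actZ T n (T x) := by
        funext x; simp [actZ, zpow_add, Equiv.Perm.mul_apply]
      rw [h]; exact ih.comp T.continuous
  | pred n ih =>
      have h : actZ T (-n - 1) = fun x => actZ T (-n) (T.symm x) := by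
        funext x
        have : (T.toEquiv)⁻¹ = T.symm.toEquiv := rfl
        simp [actZ, zpow_sub, Equiv.Perm.mul_apply, this]
      rw [h]; exact ih.comp T.continuous_symm

theorem stmt_7 {X : Type*} [MetricSpace X] [CompactSpace X] [Nontrivial X]
    (T : X ≃ₜ X)
    -- the ℤ-action is minimal: every orbit is dense
    (hmin : ∀ x : X, Dense (Set.range fun z : ℤ => actZ T z x))
    (U : Set X) (hUopen : IsOpen U) (hUne : U.Nonempty)
    (φ : X → ℝ) (hφcont : Continuous φ) (hφ01 : ∀ x, φ x ∈ Set.Icc (0 : ℝ) 1)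
    (hφU : ∀ x ∉ U, φ x = 1)
    (hφ0 : (interior (φ ⁻¹' {0})).Nonempty) :
    ∃ N : ℕ,
      -- every random walk stops within N steps: the product φ(x)·φ(x−1)⋯φ(x−N) vanishes
      (∀ x : X, ∏ j ∈ Finset.range (N + 1), φ (actZ T (-(j : ℤ)) x) = 0) ∧
      -- consequently all terms of the series beyond N vanish: it is a finite sum
      (∀ x : X, ∀ j : ℕ, N < j → levelTerm T φ j x = 0) ∧
      -- and the level function ξ(x) = Σ_{j} j·φ(x)⋯φ(x−j+1)(1−φ(x−j)) is continuous
      Continuous (fun x => ∑' j : ℕ, levelTerm T φ j x) := by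
  set V := interior (φ ⁻¹' {0}) with hV
  have hVopen : IsOpen V := isOpen_interior
  have hVzero : ∀ y ∈ V, φ y = 0 := by
    intro y hy
    have : y ∈ φ ⁻¹' {0} := interior_subset hy
    simpa using this
  -- open cover by preimages of V
  have hcov : (Set.univ : Set X) ⊆ ⋃ z : ℤ, (actZ T z) ⁻¹' V := by
    intro x _
    obtain ⟨y, ⟨z, hz⟩, hyV⟩ := (hmin x).exists_mem_open hVopen hφ0
    exact Set.mem_iUnion.2 ⟨z, by simpa [hz] using hyV⟩
  obtain ⟨t, ht⟩ := isCompact_univ.elim_finite_subcover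
    (fun z : ℤ => (actZ T z) ⁻¹' V) (fun z => hVopen.preimage (actZ_cont T z)) hcov
  -- bound the translations
  set M : ℕ := t.sup fun z => z.natAbs with hM
  have hprod : ∀ x : X, ∏ j ∈ Finset.range (2 * M + 1), φ (actZ T (-(j : ℤ)) x) = 0 := by
    intro x
    have hx : actZ T (-(M : ℤ)) x ∈ ⋃ z ∈ t, (actZ T z) ⁻¹' V := ht (Set.mem_univ _)
    obtain ⟨z, hzt, hzV⟩ := Set.mem_iUnion₂.1 hx
    have habs : z.natAbs ≤ M := Finset.le_sup hzt
    set j : ℕ := (M - z).toNat with hj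
    have hzM : z ≤ (M : ℤ) := le_trans (Int.le_natAbs) (by exact_mod_cast habs)
    have hjz : (j : ℤ) = (M : ℤ) - z := Int.toNat_of_nonneg (by omega)
    have hjle : j ≤ 2 * M := by omega
    have hmem : actZ T (-(j : ℤ)) x ∈ V := by
      have := actZ_add T z (-(M : ℤ)) x
      rw [hjz]; simpa [show z + -(M:ℤ) = -((M:ℤ) - z) by ring] using this ▸ hzV
    exact Finset.prod_eq_zero (Finset.mem_range.2 (by omega)) (hVzero _ hmem)
  have hvan : ∀ x : X, ∀ j : ℕ, 2 * M < j → levelTerm T φ j x = 0 := by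
    intro x j hj
    have hsub : Finset.range (2 * M + 1) ⊆ Finset.range j :=
      Finset.range_subset_range.2 (by omega)
    obtain ⟨i, hi, h0⟩ := Finset.prod_eq_zero_iff.1 (hprod x)
    have : ∏ i ∈ Finset.range j, φ (actZ T (-(i : ℤ)) x) = 0 :=
      Finset.prod_eq_zero (hsub hi) h0
    simp [levelTerm, this]
  refine ⟨2 * M, hprod, hvan, ?_⟩
  have heq : (fun x => ∑' j : ℕ, levelTerm T φ j x)
      = fun x => ∑ j ∈ Finset.range (2 * M + 1), levelTerm T φ j x := by
    funext x
    exact tsum_eq_sum (fun j hj => hvan x j (by simp [Finset.mem_range] at hj; omega))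
  rw [heq]
  apply continuous_finset_sum
  intro j _
  unfold levelTerm
  exact (continuous_const.mul (continuous_finset_prod _ fun i _ =>
    hφcont.comp (actZ_cont T _))).mul
    (continuous_const.sub (hφcont.comp (actZ_cont T _)))
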